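/- Let G be a graph in which every edge lies in a unique triangle and every non-edge has exactly two common neighbors, and suppose G is k-regular. Then the number of edges between the neighborhood N(a) of any vertex a and the set W(a) of vertices at distance 2 from a equals k*(k-2), and also equals 2*(n-k-1), where n is the number of vertices. -/

import Mathlib

lemma cn_finset {V : Type*} [Fintype V] [DecidableEq V] (G : SimpleGraph V)
    [DecidableRel G.Adj] (a b : V) :
    (G.commonNeighbors a b).ncard = (G.neighborFinset a ∩ G.neighborFinset b).card := by
  rw [Set.ncard_eq_toFinset_card']
  congr 1
  ext x
  rw [Set.mem_toFinset]
  simp [SimpleGraph.commonNeighbors]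

theorem stmt_7 {V : Type*} [Fintype V] [DecidableEq V] (G : SimpleGraph V)
    [DecidableRel G.Adj] {n k : ℕ}
    (hn : Fintype.card V = n)
    (hreg : G.IsRegularOfDegree k)
    (htri : ∀ a b : V, G.Adj a b → (G.commonNeighbors a b).ncard = 1)
    (hquad : ∀ a b : V, a ≠ b → ¬ G.Adj a b → (G.commonNeighbors a b).ncard = 2)
    (a : V) :
    (Finset.univ.filter (fun p : V × V =>
        p.1 ∈ G.neighborFinset a ∧
        p.2 ∉ G.neighborFinset a ∧ p.2 ≠ a ∧
        G.Adj p.1 p.2)).card = k * (k - 2) ∧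
    (Finset.univ.filter (fun p : V × V =>
        p.1 ∈ G.neighborFinset a ∧
        p.2 ∉ G.neighborFinset a ∧ p.2 ≠ a ∧
        G.Adj p.1 p.2)).card = 2 * (n - k - 1) := by
  classical
  set S := (Finset.univ.filter (fun p : V × V =>
        p.1 ∈ G.neighborFinset a ∧
        p.2 ∉ G.neighborFinset a ∧ p.2 ≠ a ∧
        G.Adj p.1 p.2)) with hS
  have haN : a ∉ G.neighborFinset a := by simp
  -- First count
  have h1 : S.card = k * (k - 2) := by
    have hdecomp : S = (G.neighborFinset a).biUnion (fun b =>
        ((G.neighborFinset b) \ insert a (G.neighborFinset a)).image (fun w => (b, w))) := by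
      ext ⟨b, w⟩
      simp only [hS, Finset.mem_filter, Finset.mem_univ, true_and, Finset.mem_biUnion,
        Finset.mem_image, Finset.mem_sdiff, Finset.mem_insert, SimpleGraph.mem_neighborFinset]
      constructor
      · rintro ⟨h1, h2, h3, h4⟩
        exact ⟨b, h1, w, ⟨h4, by tauto⟩, rfl⟩
      · rintro ⟨b', hb', w', ⟨hw1, hw2⟩, heq⟩
        obtain ⟨rfl, rfl⟩ := Prod.mk.injEq .. ▸ heq
        push_neg at hw2
        exact ⟨hb', hw2.2, hw2.1, hw1⟩
    rw [hdecomp, Finset.card_biUnion]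
    · have hcard : ∀ b ∈ G.neighborFinset a,
          (((G.neighborFinset b) \ insert a (G.neighborFinset a)).image (fun w => (b, w))).card
          = k - 2 := by
        intro b hb
        rw [Finset.card_image_of_injective _ (fun x y h => (Prod.mk.injEq .. ▸ h).2)]
        have hadj : G.Adj a b := (SimpleGraph.mem_neighborFinset ..).1 hb
        have hinter : G.neighborFinset b ∩ insert a (G.neighborFinset a)
            = insert a (G.neighborFinset b ∩ G.neighborFinset a) := by
          ext x
          simp only [Finset.mem_inter, Finset.mem_insert, SimpleGraph.mem_neighborFinset]
          constructor
          · rintro ⟨hx, rfl | hx2⟩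
            · exact Or.inl rfl
            · exact Or.inr ⟨hx, hx2⟩
          · rintro (rfl | ⟨hx, hx2⟩)
            · exact ⟨hadj.symm, Or.inl rfl⟩
            · exact ⟨hx, Or.inr hx2⟩
        have hic : (G.neighborFinset b ∩ insert a (G.neighborFinset a)).card = 2 := by
          rw [hinter, Finset.card_insert_of_notMem (by simp), Finset.inter_comm]
          have := htri a b hadj
          rw [cn_finset] at this
          omega
        have hsub : (G.neighborFinset b ∩ insert a (G.neighborFinset a)).card
            + (G.neighborFinset b \ insert a (G.neighborFinset a)).card
            = (G.neighborFinset b).card := by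
          rw [Finset.card_inter_add_card_sdiff]
        have hk : (G.neighborFinset b).card = k := hreg b
        omega
      rw [Finset.sum_congr rfl hcard, Finset.sum_const, smul_eq_mul]
      congr 1
      exact hreg a
    · intro b hb c hc hbc
      simp only [Finset.disjoint_left, Finset.mem_image]
      rintro ⟨x, y⟩ ⟨_, _, h1⟩ ⟨_, _, h2⟩
      rw [Prod.mk.injEq] at h1 h2
      exact hbc (h1.1.trans h2.1.symm)
  -- Second count
  have h2 : S.card = 2 * (n - k - 1) := by
    set W := (Finset.univ : Finset V) \ insert a (G.neighborFinset a) with hW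
    have hdecomp : S = W.biUnion (fun w =>
        ((G.neighborFinset a ∩ G.neighborFinset w)).image (fun b => (b, w))) := by
      ext ⟨b, w⟩
      simp only [hS, hW, Finset.mem_filter, Finset.mem_univ, true_and, Finset.mem_biUnion,
        Finset.mem_image, Finset.mem_sdiff, Finset.mem_insert, Finset.mem_inter,
        SimpleGraph.mem_neighborFinset]
      constructor
      · rintro ⟨h1, h2, h3, h4⟩
        exact ⟨w, by tauto, b, ⟨h1, h4.symm⟩, rfl⟩
      · rintro ⟨w', hw', b', ⟨hb1, hb2⟩, heq⟩
        obtain ⟨rfl, rfl⟩ := Prod.mk.injEq .. ▸ heq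
        push_neg at hw'
        exact ⟨hb1, hw'.2, hw'.1, hb2.symm⟩
    rw [hdecomp, Finset.card_biUnion]
    · have hcard : ∀ w ∈ W,
          (((G.neighborFinset a ∩ G.neighborFinset w)).image (fun b => (b, w))).card = 2 := by
        intro w hw
        rw [Finset.card_image_of_injective _ (fun x y h => (Prod.mk.injEq .. ▸ h).1)]
        simp only [hW, Finset.mem_sdiff, Finset.mem_insert, SimpleGraph.mem_neighborFinset] at hw
        push_neg at hw
        have := hquad a w (Ne.symm hw.2.1) hw.2.2
        rwa [cn_finset] at this
      rw [Finset.sum_congr rfl hcard, Finset.sum_const, smul_eq_mul, mul_comm]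
      congr 1
      rw [hW, Finset.card_sdiff_of_subset (Finset.subset_univ _),
        Finset.card_insert_of_notMem haN]
      have h3 : (G.neighborFinset a).card = k := hreg a
      have h4 : (Finset.univ : Finset V).card = n := by rw [Finset.card_univ, hn]
      omega
    · intro b hb c hc hbc
      simp only [Finset.disjoint_left, Finset.mem_image]
      rintro ⟨x, y⟩ ⟨_, _, h1⟩ ⟨_, _, h2⟩
      rw [Prod.mk.injEq] at h1 h2
      exact hbc (h1.2.trans h2.2.symm)
  exact ⟨h1, h2⟩
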